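/- Define for 0 ≤ p ≤ N the constants c_p := (1/[N−p]_q!) · Π_{l=p}^{N−1} (q^{l−N/2} + q^{N/2−l})/(q^{1−N/2} + q^{N/2−1}) and d_p := d_0 · ([N]_q!/([p]_q!·[N−p]_q!)) · (q^{p−N/2} + q^{N/2−p})/(q^{−N/2} + q^{N/2}) with d_0 := c_0 (so that c_N = 1). Then c_p · c_{N−p} = d_p for all 0 ≤ p ≤ N. -/

import Mathlib

/-- The symmetric q-number `[m]_q = (q^m − q^{−m})/(q − q⁻¹)`. -/
noncomputable def qnum (q : ℝ) (m : ℕ) : ℝ := (q ^ (m : ℤ) - q ^ (-(m : ℤ))) / (q - q⁻¹)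

/-- The q-factorial `[m]_q! = [1]_q [2]_q ⋯ [m]_q`. -/
noncomputable def qfact (q : ℝ) (m : ℕ) : ℝ := ∏ k ∈ Finset.range m, qnum q (k + 1)

/-- The Hodge-map normalization constants
`c_p = (1/[N−p]_q!) Π_{l=p}^{N−1} (q^{l−N/2}+q^{N/2−l})/(q^{1−N/2}+q^{N/2−1})`. -/
noncomputable def cHodge (N : ℕ) (q : ℝ) (p : ℕ) : ℝ :=
  (qfact q (N - p))⁻¹ *
    ∏ l ∈ Finset.Ico p N,
      (q ^ ((l : ℝ) - (N : ℝ) / 2) + q ^ ((N : ℝ) / 2 - (l : ℝ))) /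
        (q ^ (1 - (N : ℝ) / 2) + q ^ ((N : ℝ) / 2 - 1))

/-- `d_p = d₀ ([N]_q!/([p]_q![N−p]_q!)) (q^{p−N/2}+q^{N/2−p})/(q^{−N/2}+q^{N/2})`
with `d₀ = c₀`. -/
noncomputable def dHodge (N : ℕ) (q : ℝ) (p : ℕ) : ℝ :=
  cHodge N q 0 * (qfact q N / (qfact q p * qfact q (N - p))) *
    ((q ^ ((p : ℝ) - (N : ℝ) / 2) + q ^ ((N : ℝ) / 2 - (p : ℝ))) /
      (q ^ (-((N : ℝ) / 2)) + q ^ ((N : ℝ) / 2)))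

open Finset

lemma qnum_pos {q : ℝ} (hq : 0 < q) (hq1 : q ≠ 1) {m : ℕ} (hm : 0 < m) : 0 < qnum q m := by
  unfold qnum
  have hmm : -(m : ℤ) < (m : ℤ) := by omega
  rcases lt_or_gt_of_ne hq1 with h | h
  · apply div_pos_of_neg_of_neg
    · have := zpow_lt_zpow_right_of_lt_one₀ hq h hmm
      linarith
    · have : 1 < q⁻¹ := (one_lt_inv₀ hq).mpr h
      linarith
  · apply div_pos
    · have := zpow_lt_zpow_right₀ h hmm
      linarith
    · have : q⁻¹ < 1 := inv_lt_one_of_one_lt₀ h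
      linarith

lemma qfact_pos {q : ℝ} (hq : 0 < q) (hq1 : q ≠ 1) (m : ℕ) : 0 < qfact q m :=
  Finset.prod_pos fun k _ => qnum_pos hq hq1 (Nat.succ_pos k)

noncomputable def Gfun (N : ℕ) (q : ℝ) (l : ℕ) : ℝ :=
  q ^ ((l : ℝ) - (N : ℝ) / 2) + q ^ ((N : ℝ) / 2 - (l : ℝ))

noncomputable def Dfun (N : ℕ) (q : ℝ) : ℝ :=
  q ^ (1 - (N : ℝ) / 2) + q ^ ((N : ℝ) / 2 - 1)

lemma cHodge_eq (N : ℕ) (q : ℝ) (p : ℕ) :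
    cHodge N q p = (qfact q (N - p))⁻¹ * ∏ l ∈ Finset.Ico p N, Gfun N q l / Dfun N q := rfl

lemma Gfun_pos {N : ℕ} {q : ℝ} (hq : 0 < q) (l : ℕ) : 0 < Gfun N q l :=
  add_pos (Real.rpow_pos_of_pos hq _) (Real.rpow_pos_of_pos hq _)

lemma Dfun_pos {N : ℕ} {q : ℝ} (hq : 0 < q) : 0 < Dfun N q :=
  add_pos (Real.rpow_pos_of_pos hq _) (Real.rpow_pos_of_pos hq _)

lemma Gfun_sym {N : ℕ} (q : ℝ) {l : ℕ} (hl : l ≤ N) : Gfun N q (N - l) = Gfun N q l := by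
  unfold Gfun
  rw [Nat.cast_sub hl, show ((N : ℝ) - l) - (N : ℝ) / 2 = (N : ℝ) / 2 - l by ring,
    show (N : ℝ) / 2 - ((N : ℝ) - l) = (l : ℝ) - (N : ℝ) / 2 by ring, add_comm]


set_option maxHeartbeats 1000000 in
theorem cHodge_mul (N : ℕ) (q : ℝ) (hq : 0 < q) (hq1 : q ≠ 1)
    (p : ℕ) (hp : p ≤ N) :
    cHodge N q p * cHodge N q (N - p) = dHodge N q p := by
  have hNp : N - (N - p) = p := by omega
  set G : ℕ → ℝ := Gfun N q with hG
  set D : ℝ := Dfun N q with hDdef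
  have hprod : ∀ a : ℕ, (∏ l ∈ Ico a N, (G l / D)) = (∏ l ∈ Ico a N, G l) / D ^ (N - a) := by
    intro a; rw [Finset.prod_div_distrib, Finset.prod_const, Nat.card_Ico]
  have hrefl : (∏ l ∈ Ico (N - p) N, G l) = ∏ j ∈ Ico 1 (p + 1), G j := by
    refine (Finset.prod_nbij' (fun j => N - j) (fun l => N - l) ?_ ?_ ?_ ?_ ?_).symm
    · intro a ha; simp only [Finset.mem_Ico] at *; omega
    · intro a ha; simp only [Finset.mem_Ico] at *; omega
    · intro a ha; simp only [Finset.mem_Ico] at *; omega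
    · intro a ha; simp only [Finset.mem_Ico] at *; omega
    · intro a ha
      simp only [Finset.mem_Ico] at ha
      exact (Gfun_sym q (by omega)).symm
  have hsplit : (∏ l ∈ Ico 0 p, G l) * ∏ l ∈ Ico p N, G l = ∏ l ∈ Ico 0 N, G l :=
    Finset.prod_Ico_consecutive G (Nat.zero_le p) hp
  have hstep : (∏ j ∈ Ico 1 (p + 1), G j) * G 0 = (∏ l ∈ Ico 0 p, G l) * G p := by
    have h1 : ∏ l ∈ Ico 0 (p + 1), G l = (∏ l ∈ Ico 0 p, G l) * G p :=
      Finset.prod_Ico_succ_top (Nat.zero_le p) G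
    have h2 : ∏ l ∈ Ico 0 (p + 1), G l = (∏ l ∈ Ico 0 1, G l) * ∏ j ∈ Ico 1 (p + 1), G j :=
      (Finset.prod_Ico_consecutive G (Nat.zero_le 1) (by omega)).symm
    have h3 : ∏ l ∈ Ico 0 1, G l = G 0 := by
      simp
    rw [h3] at h2
    rw [← h1, h2]; ring
  -- nonzeroness
  have hF : ∀ m : ℕ, qfact q m ≠ 0 := fun m => (qfact_pos hq hq1 m).ne'
  have hGne : ∀ l : ℕ, G l ≠ 0 := fun l => (Gfun_pos hq l).ne'
  have hDne : D ≠ 0 := (Dfun_pos hq).ne'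
  -- rewrite everything
  have hG0 : G 0 = q ^ (-((N : ℝ) / 2)) + q ^ ((N : ℝ) / 2) := by
    rw [hG]; unfold Gfun; norm_num
  have hGp : G p = q ^ ((p : ℝ) - (N : ℝ) / 2) + q ^ ((N : ℝ) / 2 - (p : ℝ)) := rfl
  rw [dHodge, cHodge_eq N q p, cHodge_eq N q (N - p), cHodge_eq N q 0,
    ← hG, ← hDdef, hprod, hprod, hprod, ← hG0, ← hGp, hrefl, hNp, Nat.sub_zero]
  have e1 : (∏ j ∈ Ico 1 (p + 1), G j) = (∏ l ∈ Ico 0 p, G l) * G p / G 0 := by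
    rw [eq_div_iff (hGne 0)]; exact hstep
  have hDpow : D ^ N = D ^ (N - p) * D ^ p := by
    rw [← pow_add]; congr 1; omega
  rw [e1, ← hsplit, hDpow]
  field_simp
  rw [div_eq_div_iff]
  · ring
  · simp [hF, hGne, hDne]
  · simp [hF, hGne, hDne]
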